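/- arXiv:1706.02946 — 2 statements merged into one kernel-verified Lean document; each statement's English description precedes it below -/
import Mathlib

section
/- Let A = [[1,0,0,1,1,0,1],[0,1,0,1,0,1,1],[0,0,1,0,1,1,1]] be the model matrix of AS independence of three binary attributes on the 7-cell sample space excluding (0,0,0). The vector p̂ = (s, s, s, s², s², s², s³), where s = 2^{1/3} − 1, is a strictly positive probability vector (its coordinates sum to 1) satisfying log p̂ ∈ rowspace(A), and A p̂ = γ A q with q = (0,0,0,0,0,0,1)ᵀ and γ = 2 − 4^{1/3}. -/
open Matrix BigOperators

theorem stmt14 :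
    let s : ℝ := (2:ℝ) ^ ((1:ℝ)/3) - 1
    let γ : ℝ := 2 - (4:ℝ) ^ ((1:ℝ)/3)
    let A : Matrix (Fin 3) (Fin 7) ℝ :=
      !![1,0,0,1,1,0,1;0,1,0,1,0,1,1;0,0,1,0,1,1,1]
    let phat : Fin 7 → ℝ := ![s,s,s,s^2,s^2,s^2,s^3]
    let q : Fin 7 → ℝ := ![0,0,0,0,0,0,1]
    (∀ i, 0 < phat i) ∧ (∑ i, phat i = 1) ∧
    ((fun i => Real.log (phat i)) ∈ Submodule.span ℝ (Set.range fun j => A j)) ∧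
    A.mulVec phat = γ • A.mulVec q := by
  intro s γ A phat q
  set c : ℝ := (2:ℝ) ^ ((1:ℝ)/3) with hc
  have hc3 : c ^ 3 = 2 := by
    rw [hc, ← Real.rpow_natCast ((2:ℝ) ^ ((1:ℝ)/3)) 3, ← Real.rpow_mul (by norm_num)]
    norm_num
  have hc1 : 1 < c :=
    (Real.one_lt_rpow_iff_of_pos (by norm_num)).mpr (Or.inl ⟨by norm_num, by norm_num⟩)
  have hs : s = c - 1 := rfl
  have hspos : 0 < s := by rw [hs]; linarith
  have h4 : (4:ℝ) ^ ((1:ℝ)/3) = c ^ 2 := by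
    rw [hc, ← Real.rpow_natCast ((2:ℝ) ^ ((1:ℝ)/3)) 2, ← Real.rpow_mul (by norm_num),
      show (4:ℝ) = (2:ℝ) ^ (2:ℝ) by norm_num, ← Real.rpow_mul (by norm_num)]
    norm_num
  refine ⟨?_, ?_, ?_, ?_⟩
  · intro i
    fin_cases i <;>
      first
        | exact hspos
        | exact pow_pos hspos 2
        | exact pow_pos hspos 3
  · show s + (s + (s + (s^2 + (s^2 + (s^2 + (s^3 + 0)))))) = 1
    rw [hs]; nlinarith [hc3]
  · have hmem : ∀ j : Fin 3, A j ∈ Submodule.span ℝ (Set.range fun j => A j) :=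
      fun j => Submodule.subset_span ⟨j, rfl⟩
    have h : (fun i => Real.log (phat i)) =
        Real.log s • A 0 + Real.log s • A 1 + Real.log s • A 2 := by
      funext i
      have h2 : Real.log (s^2) = 2 * Real.log s := by
        rw [Real.log_pow]; push_cast; ring
      have h3 : Real.log (s^3) = 3 * Real.log s := by
        rw [Real.log_pow]; push_cast; ring
      fin_cases i
      · show Real.log s = Real.log s * 1 + Real.log s * 0 + Real.log s * 0; ring
      · show Real.log s = Real.log s * 0 + Real.log s * 1 + Real.log s * 0; ring
      · show Real.log s = Real.log s * 0 + Real.log s * 0 + Real.log s * 1; ring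
      · show Real.log (s^2) = Real.log s * 1 + Real.log s * 1 + Real.log s * 0
        rw [h2]; ring
      · show Real.log (s^2) = Real.log s * 1 + Real.log s * 0 + Real.log s * 1
        rw [h2]; ring
      · show Real.log (s^2) = Real.log s * 0 + Real.log s * 1 + Real.log s * 1
        rw [h2]; ring
      · show Real.log (s^3) = Real.log s * 1 + Real.log s * 1 + Real.log s * 1
        rw [h3]; ring
    rw [h]
    exact Submodule.add_mem _ (Submodule.add_mem _
      (Submodule.smul_mem _ _ (hmem 0)) (Submodule.smul_mem _ _ (hmem 1)))
      (Submodule.smul_mem _ _ (hmem 2))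
  · have key : s + 2*s^2 + s^3 = γ := by
      show _ = 2 - (4:ℝ) ^ ((1:ℝ)/3)
      rw [h4, hs]; nlinarith [hc3]
    have e1 : phat (5:Fin 7) = s^2 := rfl
    have e2 : phat (6:Fin 7) = s^3 := rfl
    have e3 : q (5:Fin 7) = 0 := rfl
    have e4 : q (6:Fin 7) = 1 := rfl
    have a05 : (![(1:ℝ),0,0,1,1,0,1]) (5:Fin 7) = 0 := rfl
    have a06 : (![(1:ℝ),0,0,1,1,0,1]) (6:Fin 7) = 1 := rfl
    have a15 : (![(0:ℝ),1,0,1,0,1,1]) (5:Fin 7) = 1 := rfl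
    have a16 : (![(0:ℝ),1,0,1,0,1,1]) (6:Fin 7) = 1 := rfl
    have a25 : (![(0:ℝ),0,1,0,1,1,1]) (5:Fin 7) = 1 := rfl
    have a26 : (![(0:ℝ),0,1,0,1,1,1]) (6:Fin 7) = 1 := rfl
    funext i
    fin_cases i <;>
      simp [A, phat, q, mulVec, dotProduct, Fin.sum_univ_seven,
        e1, e2, e3, e4, a05, a06, a15, a16, a25, a26] <;>
      linarith [key]
end

section
/- For the ELP matrices A = [[1,0,0,1,1,0],[0,1,0,1,0,1],[0,0,1,0,1,1]] and Ā = A augmented with the all-ones row: if p > 0 satisfies log p ∈ rowspace(Ā) with a nonzero overall effect (i.e., log p = θ₀·1 + Aᵀθ with θ₀ ≠ 0), then p does not satisfy all three multiplicative constraints p₄ = p₁p₂, p₅ = p₁p₃, p₆ = p₂p₃. -/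
open Matrix BigOperators

theorem stmt18 (p : Fin 6 → ℝ) (hp : ∀ i, 0 < p i) (θ₀ : ℝ) (θ : Fin 3 → ℝ)
    (hθ₀ : θ₀ ≠ 0)
    (hlog : ∀ i, Real.log (p i) = θ₀ + ∑ j,
      (!![1,0,0,1,1,0;0,1,0,1,0,1;0,0,1,0,1,1] : Matrix (Fin 3) (Fin 6) ℝ) j i * θ j) :
    ¬ (p 3 = p 0 * p 1 ∧ p 4 = p 0 * p 2 ∧ p 5 = p 1 * p 2) := by
  rintro ⟨h1, -, -⟩
  have hlog3 := hlog 3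
  have hlog0 := hlog 0
  have hlog1 := hlog 1
  rw [h1, Real.log_mul (hp 0).ne' (hp 1).ne'] at hlog3
  simp [Fin.sum_univ_three, Matrix.vecHead, Matrix.vecTail] at hlog3 hlog0 hlog1
  apply hθ₀
  linarith
end
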